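/- For each fixed i, the function n ↦ s_{n,i} agrees for n ≥ i+1 with a polynomial in n of degree i with leading coefficient 1/i!. -/

import Mathlib

open Polynomial Finset

private lemma bern_coeff_top (n : ℕ) : (Polynomial.bernoulli n).coeff n = 1 := by
  rw [Polynomial.bernoulli_def, Polynomial.finset_sum_coeff]
  rw [Finset.sum_eq_single n]
  · simp
  · intro i hi hne
    simp only [Polynomial.coeff_monomial]
    rw [if_neg hne]
  · simp

private lemma bern_degree_le (n : ℕ) : (Polynomial.bernoulli n).degree ≤ n := by
  rw [Polynomial.bernoulli_def]
  refine (Polynomial.degree_sum_le _ _).trans ?_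
  simp only [Finset.sup_le_iff, Finset.mem_range]
  intro i hi
  exact (Polynomial.degree_monomial_le _ _).trans (by exact_mod_cast Nat.le_of_lt_succ hi)

private lemma bern_degree (n : ℕ) : (Polynomial.bernoulli n).degree = n :=
  le_antisymm (bern_degree_le n)
    (Polynomial.le_degree_of_ne_zero (by rw [bern_coeff_top]; exact one_ne_zero))

private lemma bern_leadingCoeff (n : ℕ) : (Polynomial.bernoulli n).leadingCoeff = 1 := by
  have h := bern_degree n
  have hnat : (Polynomial.bernoulli n).natDegree = n := Polynomial.natDegree_eq_of_degree_eq_some h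
  rw [Polynomial.leadingCoeff, hnat, bern_coeff_top]

/-- discrete antiderivative with degree and leading coeff control -/
private lemma antideriv (p : Polynomial ℚ) (hp : p ≠ 0) :
    ∃ P : Polynomial ℚ, P.degree = (p.natDegree + 1 : ℕ) ∧
      P.leadingCoeff = p.leadingCoeff / (p.natDegree + 1) ∧
      ∀ n : ℕ, P.eval (n : ℚ) = ∑ m ∈ Finset.range n, p.eval (m : ℚ) := by
  set d := p.natDegree with hd

  have hc : p.leadingCoeff / (d + 1 : ℚ) ≠ 0 := by
    apply div_ne_zero (Polynomial.leadingCoeff_ne_zero.mpr hp)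
    positivity
  have hBtd : (Polynomial.bernoulli (d + 1) - Polynomial.C (_root_.bernoulli (d + 1))).degree
      = ((d + 1 : ℕ) : WithBot ℕ) := by
    rw [Polynomial.degree_sub_eq_left_of_degree_lt, bern_degree]
    rw [bern_degree]
    exact Polynomial.degree_C_le.trans_lt (by exact_mod_cast Nat.succ_pos d)
  have hBtl : (Polynomial.bernoulli (d + 1) - Polynomial.C (_root_.bernoulli (d + 1))).leadingCoeff
      = 1 := by
    rw [sub_eq_add_neg, add_comm, Polynomial.leadingCoeff_add_of_degree_lt, bern_leadingCoeff]
    rw [Polynomial.degree_neg, bern_degree]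
    exact Polynomial.degree_C_le.trans_lt (by exact_mod_cast Nat.succ_pos d)
  set T : Polynomial ℚ := Polynomial.C (p.coeff d / (d + 1)) *
      (Polynomial.bernoulli (d + 1) - Polynomial.C (_root_.bernoulli (d + 1))) with hT
  have hcoeffd : p.coeff d = p.leadingCoeff := rfl
  have hTd : T.degree = ((d + 1 : ℕ) : WithBot ℕ) := by
    rw [hT, Polynomial.degree_mul, Polynomial.degree_C (by rw [hcoeffd]; exact hc),
      hBtd, zero_add]
  have hTl : T.leadingCoeff = p.leadingCoeff / (d + 1) := by
    rw [hT, Polynomial.leadingCoeff_mul, Polynomial.leadingCoeff_C, hBtl, mul_one, hcoeffd]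
  have hSd : (∑ k ∈ Finset.range d, Polynomial.C (p.coeff k / (k + 1)) *
      (Polynomial.bernoulli (k + 1) - Polynomial.C (_root_.bernoulli (k + 1)))).degree
      < ((d + 1 : ℕ) : WithBot ℕ) := by
    refine lt_of_le_of_lt (Polynomial.degree_sum_le _ _) ?_
    rw [Finset.sup_lt_iff (by exact_mod_cast WithBot.bot_lt_coe (d+1))]
    intro k hk
    refine lt_of_le_of_lt (Polynomial.degree_mul_le _ _) ?_
    have h1 : (Polynomial.bernoulli (k + 1) - Polynomial.C (_root_.bernoulli (k + 1))).degree
        ≤ ((k + 1 : ℕ) : WithBot ℕ) :=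
      (Polynomial.degree_sub_le _ _).trans (max_le (bern_degree_le _)
        (Polynomial.degree_C_le.trans (by exact_mod_cast Nat.zero_le (k + 1))))
    refine lt_of_le_of_lt (add_le_add Polynomial.degree_C_le h1) ?_
    rw [zero_add]
    exact_mod_cast Nat.succ_lt_succ (Finset.mem_range.mp hk)
  have hsplit : (∑ k ∈ Finset.range (d + 1),
      Polynomial.C (p.coeff k / (k + 1)) *
        (Polynomial.bernoulli (k + 1) - Polynomial.C (_root_.bernoulli (k + 1))))
      = (∑ k ∈ Finset.range d, Polynomial.C (p.coeff k / (k + 1)) *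
        (Polynomial.bernoulli (k + 1) - Polynomial.C (_root_.bernoulli (k + 1)))) + T := by
    rw [Finset.sum_range_succ]
  have main_deg : (∑ k ∈ Finset.range (d + 1),
      Polynomial.C (p.coeff k / (k + 1)) *
        (Polynomial.bernoulli (k + 1) - Polynomial.C (_root_.bernoulli (k + 1)))).degree
        = ((d + 1 : ℕ) : WithBot ℕ) ∧
      (∑ k ∈ Finset.range (d + 1),
      Polynomial.C (p.coeff k / (k + 1)) *
        (Polynomial.bernoulli (k + 1) - Polynomial.C (_root_.bernoulli (k + 1)))).leadingCoeff
        = p.leadingCoeff / (d + 1) := by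
    constructor
    · rw [hsplit, Polynomial.degree_add_eq_right_of_degree_lt (hTd ▸ hSd), hTd]
    · rw [hsplit, Polynomial.leadingCoeff_add_of_degree_lt (hTd ▸ hSd), hTl]
  refine ⟨∑ k ∈ Finset.range (d + 1),
      Polynomial.C (p.coeff k / (k + 1)) *
        (Polynomial.bernoulli (k + 1) - Polynomial.C (_root_.bernoulli (k + 1))), ?_, ?_, ?_⟩
  case refine_1 => exact main_deg.1
  case refine_2 => exact main_deg.2
  · intro n
    rw [Polynomial.eval_finset_sum]
    have : ∀ k ∈ Finset.range (d+1),
        (Polynomial.C (p.coeff k / (k + 1)) *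
          (Polynomial.bernoulli (k + 1) - Polynomial.C (_root_.bernoulli (k + 1)))).eval (n : ℚ)
        = p.coeff k * ∑ m ∈ Finset.range n, (m : ℚ) ^ k := by
      intro k _
      rw [Polynomial.eval_mul, Polynomial.eval_C, Polynomial.eval_sub, Polynomial.eval_C,
        Polynomial.bernoulli_succ_eval]
      field_simp
      ring
    rw [Finset.sum_congr rfl this]
    simp_rw [Finset.mul_sum]
    rw [Finset.sum_comm]
    refine Finset.sum_congr rfl fun m _ => ?_
    rw [Polynomial.eval_eq_sum_range]

private lemma comp_linear (p q : Polynomial ℚ) (hq1 : q.natDegree = 1)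
    (hqm : q.leadingCoeff = 1) (k : ℕ) (hd : p.degree = (k : WithBot ℕ)) :
    (p.comp q).degree = (k : WithBot ℕ) ∧ (p.comp q).leadingCoeff = p.leadingCoeff := by
  have hp0 : p ≠ 0 := fun h => by simp [h] at hd
  have hlc : (p.comp q).leadingCoeff = p.leadingCoeff := by
    rw [Polynomial.leadingCoeff_comp (by rw [hq1]; norm_num), hqm, one_pow, mul_one]
  have hne : p.comp q ≠ 0 := by
    rw [← Polynomial.leadingCoeff_ne_zero, hlc]
    exact Polynomial.leadingCoeff_ne_zero.mpr hp0
  have hnat : (p.comp q).natDegree = k := by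
    rw [Polynomial.natDegree_comp, hq1, mul_one]
    exact Polynomial.natDegree_eq_of_degree_eq_some hd
  exact ⟨by rw [Polynomial.degree_eq_natDegree hne, hnat], hlc⟩

theorem simple_braid_coeff_polynomial (s : ℕ → ℕ → ℚ)
    (h0 : ∀ n, 1 ≤ n → s n 0 = 1)
    (hz : ∀ n i, n ≤ i → s n i = 0)
    (hrec : ∀ n i, 1 ≤ i → i < n →
      s n i = s (n - 1) i + ∑ j ∈ Finset.Icc 1 i, s (n - j) (i - j)) :
    ∀ i : ℕ, ∃ p : Polynomial ℚ, p.degree = i ∧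
      p.leadingCoeff = 1 / (Nat.factorial i : ℚ) ∧
      ∀ n : ℕ, i + 1 ≤ n → s n i = p.eval (n : ℚ) := by
  intro i
  induction i using Nat.strong_induction_on with
  | _ i IH =>
  rcases Nat.eq_zero_or_pos i with rfl | hi
  · exact ⟨1, by simp, by simp, fun n hn => by simpa using h0 n hn⟩
  have hex : ∀ k, ∃ p : Polynomial ℚ, k < i → (p.degree = k ∧
      p.leadingCoeff = 1 / (Nat.factorial k : ℚ) ∧ ∀ n : ℕ, k + 1 ≤ n → s n k = p.eval (n : ℚ)) := by
    intro k
    by_cases h : k < i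
    · obtain ⟨p, hp⟩ := IH k h
      exact ⟨p, fun _ => hp⟩
    · exact ⟨0, fun h' => absurd h' h⟩
  choose pf hpf using hex
  set Q : Polynomial ℚ :=
    ∑ j ∈ Finset.Icc 1 i, (pf (i - j)).comp (Polynomial.X - Polynomial.C (j : ℚ)) with hQ
  -- degree facts for each summand
  have hterm : ∀ j, 1 ≤ j → j ≤ i →
      ((pf (i - j)).comp (Polynomial.X - Polynomial.C (j : ℚ))).degree = ((i - j : ℕ) : WithBot ℕ) ∧
      ((pf (i - j)).comp (Polynomial.X - Polynomial.C (j : ℚ))).leadingCoeff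
        = 1 / (Nat.factorial (i - j) : ℚ) := by
    intro j hj1 hji
    have hlt : i - j < i := by omega
    obtain ⟨hd, hl, _⟩ := hpf (i - j) hlt
    obtain ⟨cd, cl⟩ := comp_linear (pf (i - j)) _ (Polynomial.natDegree_X_sub_C _)
      (Polynomial.monic_X_sub_C _) (i - j) hd
    exact ⟨cd, by rw [cl, hl]⟩
  have h1mem : 1 ∈ Finset.Icc 1 i := Finset.mem_Icc.mpr ⟨le_refl 1, hi⟩
  have hQsplit : Q = (pf (i - 1)).comp (Polynomial.X - Polynomial.C ((1 : ℕ) : ℚ))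
      + ∑ j ∈ Finset.Ioc 1 i, (pf (i - j)).comp (Polynomial.X - Polynomial.C (j : ℚ)) := by
    rw [hQ, ← Finset.add_sum_erase _ _ h1mem, Finset.Icc_erase_left]
  have hHd := hterm 1 le_rfl hi
  have hTd : (∑ j ∈ Finset.Ioc 1 i,
      (pf (i - j)).comp (Polynomial.X - Polynomial.C (j : ℚ))).degree
      < ((i - 1 : ℕ) : WithBot ℕ) := by
    refine lt_of_le_of_lt (Polynomial.degree_sum_le _ _) ?_
    rw [Finset.sup_lt_iff (by exact_mod_cast WithBot.bot_lt_coe (i - 1))]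
    intro j hj
    obtain ⟨hj1, hji⟩ := Finset.mem_Ioc.mp hj
    rw [(hterm j (by omega) hji).1]
    exact_mod_cast (by omega : i - j < i - 1)
  have hQd : Q.degree = ((i - 1 : ℕ) : WithBot ℕ) := by
    rw [hQsplit, Polynomial.degree_add_eq_left_of_degree_lt (by rw [hHd.1]; exact hTd), hHd.1]
  have hQl : Q.leadingCoeff = 1 / (Nat.factorial (i - 1) : ℚ) := by
    rw [hQsplit, add_comm,
      Polynomial.leadingCoeff_add_of_degree_lt (by rw [hHd.1]; exact hTd), hHd.2]
  have hQne : Q ≠ 0 := fun h => by simp [h] at hQd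
  have hQnat : Q.natDegree = i - 1 := Polynomial.natDegree_eq_of_degree_eq_some hQd
  obtain ⟨P₀, hP₀d, hP₀l, hP₀e⟩ := antideriv Q hQne
  rw [hQnat] at hP₀d hP₀l
  have hii : i - 1 + 1 = i := by omega
  rw [hii] at hP₀d
  have hcast : ((i - 1 : ℕ) : ℚ) + 1 = (i : ℚ) := by
    have := congrArg (Nat.cast : ℕ → ℚ) hii
    push_cast at this
    linarith
  have hP₀l' : P₀.leadingCoeff = 1 / (Nat.factorial i : ℚ) := by
    rw [hP₀l, hQl, hcast]
    have hfac : (Nat.factorial i : ℚ) = (i : ℚ) * (Nat.factorial (i - 1) : ℚ) := by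
      rw [← Nat.cast_mul, Nat.mul_factorial_pred hi.ne']
    rw [hfac]
    have h1 : (Nat.factorial (i - 1) : ℚ) ≠ 0 := by positivity
    have h2 : (i : ℚ) ≠ 0 := by positivity
    field_simp
  -- the final polynomial
  obtain ⟨hP₁d, hP₁l⟩ := comp_linear P₀ (Polynomial.X + Polynomial.C (1 : ℚ))
    (Polynomial.natDegree_X_add_C _) (Polynomial.monic_X_add_C _) i hP₀d
  set c : ℚ := P₀.eval ((i : ℚ) + 1) with hc
  set P : Polynomial ℚ := P₀.comp (Polynomial.X + Polynomial.C (1 : ℚ)) - Polynomial.C c with hP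
  have hCc : (Polynomial.C c).degree < ((i : ℕ) : WithBot ℕ) :=
    Polynomial.degree_C_le.trans_lt (by exact_mod_cast hi)
  have hPd : P.degree = ((i : ℕ) : WithBot ℕ) := by
    rw [hP, Polynomial.degree_sub_eq_left_of_degree_lt (by rw [hP₁d]; exact hCc), hP₁d]
  have hPl : P.leadingCoeff = 1 / (Nat.factorial i : ℚ) := by
    rw [hP, sub_eq_add_neg, add_comm, Polynomial.leadingCoeff_add_of_degree_lt
      (by rw [Polynomial.degree_neg, hP₁d]; exact hCc), hP₁l, hP₀l']
  have hPe : ∀ x : ℚ, P.eval x = P₀.eval (x + 1) - c := by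
    intro x
    rw [hP]
    simp [Polynomial.eval_comp]
  have hQe : ∀ x : ℚ, Q.eval x = ∑ j ∈ Finset.Icc 1 i, (pf (i - j)).eval (x - j) := by
    intro x
    rw [hQ, Polynomial.eval_finset_sum]
    refine Finset.sum_congr rfl fun j _ => ?_
    simp [Polynomial.eval_comp]
  -- main induction
  have main : ∀ n : ℕ, i ≤ n → s n i = P.eval (n : ℚ) := by
    intro n hn
    induction n, hn using Nat.le_induction with
    | base =>
      rw [hz i i le_rfl, hPe]
      simp [hc]
    | succ n hn ih =>
      have hrec' := hrec (n + 1) i hi (by omega)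
      have hsum : ∑ j ∈ Finset.Icc 1 i, s (n + 1 - j) (i - j) = Q.eval ((n + 1 : ℕ) : ℚ) := by
        rw [hQe]
        refine Finset.sum_congr rfl fun j hj => ?_
        obtain ⟨hj1, hji⟩ := Finset.mem_Icc.mp hj
        obtain ⟨_, _, he⟩ := hpf (i - j) (by omega)
        rw [he (n + 1 - j) (by omega)]
        congr 1
        rw [Nat.cast_sub (by omega)]
      have hdiff : P.eval ((n + 1 : ℕ) : ℚ) - P.eval ((n : ℕ) : ℚ) = Q.eval ((n + 1 : ℕ) : ℚ) := by
        rw [hPe, hPe]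
        have e1 : ((n + 1 : ℕ) : ℚ) + 1 = ((n + 2 : ℕ) : ℚ) := by push_cast; ring
        have e2 : ((n : ℕ) : ℚ) + 1 = ((n + 1 : ℕ) : ℚ) := by push_cast; ring
        rw [e1, e2, hP₀e, hP₀e, Finset.sum_range_succ]
        ring
      rw [hrec', Nat.add_sub_cancel, hsum, ih]
      linarith [hdiff]
  refine ⟨P, hPd, hPl, fun n hn => main n (by omega)⟩
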